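/- Let β(I) = I³·sinh(π(I−1)/2)/((I−1)³·sinh(πI/2)) (extended by β(0) = 0) and let μ ≠ 0 satisfy e^{−π/2} < 1/|μ| < e^{π/2}. Then the equation β(I) = 1/|μ| has exactly three solutions I_− ∈ (−∞,0), I_0 ∈ (0,1), I_+ ∈ (1,+∞); moreover β(I) < 1/|μ| for I ∈ (I_−, I_0) ∪ (I_+, +∞) and β(I) > 1/|μ| for I ∈ (−∞, I_−) ∪ (I_0, 1) ∪ (1, I_+). -/

import Mathlib

open Real

/-- `β(I) = I³ sinh(π(I-1)/2) / ((I-1)³ sinh(πI/2))` (with `β(0) = 0` by Lean's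
division convention, matching the continuous extension). -/
noncomputable def betaFn (I : ℝ) : ℝ :=
  I ^ 3 * Real.sinh (π * (I - 1) / 2) / ((I - 1) ^ 3 * Real.sinh (π * I / 2))

lemma sinh_half_pi_lt : Real.sinh (π / 2) < 3 * π / 2 := by
  have h1 : Real.sinh (π / 2) < Real.exp (π / 2) / 2 := by
    rw [Real.sinh_eq]
    have := Real.exp_pos (-(π/2))
    linarith
  have h2 : Real.exp (π / 2) < Real.exp 2 := by
    apply Real.exp_lt_exp.2
    have := Real.pi_lt_d2
    linarith
  have h3 : Real.exp 2 < 9 := by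
    have h := Real.exp_one_lt_d9
    calc Real.exp 2 = Real.exp 1 * Real.exp 1 := by rw [← Real.exp_add]; norm_num
    _ < 3 * 3 := by nlinarith [Real.exp_pos 1]
    _ = 9 := by norm_num
  have := Real.pi_gt_three
  linarith

lemma hasDerivAt_betaFn {I : ℝ} (h1 : I ≠ 1) (h0 : I ≠ 0) :
    HasDerivAt betaFn
      (I ^ 2 * (I - 1) ^ 2 *
        (π / 2 * Real.sinh (π / 2) * (I * (I - 1)) -
          3 * Real.sinh (π * (I - 1) / 2) * Real.sinh (π * I / 2)) /
        ((I - 1) ^ 3 * Real.sinh (π * I / 2)) ^ 2) I := by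
  have hsB : Real.sinh (π * I / 2) ≠ 0 := by
    rw [Real.sinh_ne_zero]
    intro h
    apply h0
    have hπ : 0 < π := Real.pi_pos
    nlinarith [mul_self_nonneg I]
  have hden : (I - 1) ^ 3 * Real.sinh (π * I / 2) ≠ 0 :=
    mul_ne_zero (pow_ne_zero _ (sub_ne_zero.2 h1)) hsB
  have hA : HasDerivAt (fun I : ℝ => Real.sinh (π * (I - 1) / 2))
      (Real.cosh (π * (I - 1) / 2) * (π / 2)) I := by
    have h := (Real.hasDerivAt_sinh (π * (I - 1) / 2)).comp I
      (((hasDerivAt_id I).sub_const 1).const_mul π |>.div_const 2)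
    simpa [Function.comp_def, mul_comm, mul_div_assoc] using h
  have hB : HasDerivAt (fun I : ℝ => Real.sinh (π * I / 2))
      (Real.cosh (π * I / 2) * (π / 2)) I := by
    have h := (Real.hasDerivAt_sinh (π * I / 2)).comp I
      ((hasDerivAt_id I).const_mul π |>.div_const 2)
    simpa [Function.comp_def, mul_comm, mul_div_assoc] using h
  have hnum : HasDerivAt (fun I : ℝ => I ^ 3 * Real.sinh (π * (I - 1) / 2))
      (3 * I ^ 2 * Real.sinh (π * (I - 1) / 2) +
        I ^ 3 * (Real.cosh (π * (I - 1) / 2) * (π / 2))) I := by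
    have := (hasDerivAt_pow 3 I).mul hA
    simpa [Pi.mul_def, mul_comm, mul_assoc] using this
  have hde : HasDerivAt (fun I : ℝ => (I - 1) ^ 3 * Real.sinh (π * I / 2))
      (3 * (I - 1) ^ 2 * Real.sinh (π * I / 2) +
        (I - 1) ^ 3 * (Real.cosh (π * I / 2) * (π / 2))) I := by
    have hp : HasDerivAt (fun I : ℝ => (I - 1) ^ 3) (3 * (I - 1) ^ 2) I := by
      have := ((hasDerivAt_pow 3 (I - 1)).comp I ((hasDerivAt_id I).sub_const 1))
      simpa [Function.comp_def] using this
    have := hp.mul hB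
    simpa [Pi.mul_def, mul_comm, mul_assoc] using this
  have h := hnum.div hde hden
  refine h.congr_deriv ?_
  symm
  have hsin : Real.sinh (π * I / 2) * Real.cosh (π * (I - 1) / 2)
      - Real.cosh (π * I / 2) * Real.sinh (π * (I - 1) / 2) = Real.sinh (π / 2) := by
    rw [← Real.sinh_sub]; ring_nf
  rw [div_eq_div_iff (by positivity) (by positivity)]
  linear_combination (-(π/2) * I ^ 3 * (I-1) ^ 9 * Real.sinh (π * I / 2) ^ 2) * hsin

lemma F_neg_right {I : ℝ} (hI : 1 < I) :
    π / 2 * Real.sinh (π / 2) * (I * (I - 1)) -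
      3 * Real.sinh (π * (I - 1) / 2) * Real.sinh (π * I / 2) < 0 := by
  have hπ := Real.pi_pos
  have hA : π * (I - 1) / 2 < Real.sinh (π * (I - 1) / 2) :=
    Real.self_lt_sinh_iff.2 (by nlinarith)
  have hB : π * I / 2 < Real.sinh (π * I / 2) :=
    Real.self_lt_sinh_iff.2 (by nlinarith)
  have hA0 : (0:ℝ) ≤ π * (I - 1) / 2 := by nlinarith
  have hB0 : (0:ℝ) ≤ π * I / 2 := by nlinarith
  have hAB : π * (I - 1) / 2 * (π * I / 2) < Real.sinh (π * (I - 1) / 2) * Real.sinh (π * I / 2) :=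
    mul_lt_mul'' hA hB hA0 hB0
  have hs := sinh_half_pi_lt
  have hsp : 0 < Real.sinh (π / 2) := Real.sinh_pos_iff.2 (by positivity)
  nlinarith [mul_pos (mul_pos hπ (sub_pos.2 hI)) (lt_trans one_pos hI)]

lemma F_neg_left {I : ℝ} (hI : I < 0) :
    π / 2 * Real.sinh (π / 2) * (I * (I - 1)) -
      3 * Real.sinh (π * (I - 1) / 2) * Real.sinh (π * I / 2) < 0 := by
  have hπ := Real.pi_pos
  have hA : Real.sinh (π * (I - 1) / 2) < π * (I - 1) / 2 :=
    Real.sinh_lt_self_iff.2 (by nlinarith)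
  have hB : Real.sinh (π * I / 2) < π * I / 2 :=
    Real.sinh_lt_self_iff.2 (by nlinarith)
  have hA0 : π * (I - 1) / 2 < 0 := by nlinarith
  have hB0 : π * I / 2 < 0 := by nlinarith
  have hAB : π * (I - 1) / 2 * (π * I / 2) < Real.sinh (π * (I - 1) / 2) * Real.sinh (π * I / 2) := by
    have := mul_lt_mul'' (neg_lt_neg hA) (neg_lt_neg hB) (by linarith) (by linarith)
    nlinarith
  have hs := sinh_half_pi_lt
  have hsp : 0 < Real.sinh (π / 2) := Real.sinh_pos_iff.2 (by positivity)
  nlinarith [mul_pos (mul_pos hπ (neg_pos.2 hI)) (by nlinarith : (0:ℝ) < 1 - I)]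

lemma F_pos_mid {I : ℝ} (h0 : 0 < I) (h1 : I < 1) :
    0 < π / 2 * Real.sinh (π / 2) * (I * (I - 1)) -
      3 * Real.sinh (π * (I - 1) / 2) * Real.sinh (π * I / 2) := by
  have hπ := Real.pi_pos
  have hA : Real.sinh (π * (I - 1) / 2) < π * (I - 1) / 2 :=
    Real.sinh_lt_self_iff.2 (by nlinarith)
  have hB : π * I / 2 < Real.sinh (π * I / 2) :=
    Real.self_lt_sinh_iff.2 (by positivity)
  have hA0 : π * (I - 1) / 2 < 0 := by nlinarith
  have hB0 : 0 < π * I / 2 := by positivity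
  have hAB : Real.sinh (π * (I - 1) / 2) * Real.sinh (π * I / 2) < π * (I - 1) / 2 * (π * I / 2) := by
    have := mul_lt_mul'' (neg_lt_neg hA) hB (by linarith) (by linarith)
    nlinarith
  have hs := sinh_half_pi_lt
  have hsp : 0 < Real.sinh (π / 2) := Real.sinh_pos_iff.2 (by positivity)
  nlinarith [mul_pos (mul_pos hπ h0) (by nlinarith : (0:ℝ) < 1 - I)]

lemma deriv_betaFn {I : ℝ} (h1 : I ≠ 1) (h0 : I ≠ 0) :
    deriv betaFn I =
      I ^ 2 * (I - 1) ^ 2 *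
        (π / 2 * Real.sinh (π / 2) * (I * (I - 1)) -
          3 * Real.sinh (π * (I - 1) / 2) * Real.sinh (π * I / 2)) /
        ((I - 1) ^ 3 * Real.sinh (π * I / 2)) ^ 2 :=
  (hasDerivAt_betaFn h1 h0).deriv

lemma sinh_piI_ne_zero {I : ℝ} (h0 : I ≠ 0) : Real.sinh (π * I / 2) ≠ 0 := by
  rw [Real.sinh_ne_zero]
  intro h
  apply h0
  have hπ : 0 < π := Real.pi_pos
  nlinarith [mul_self_nonneg I]

lemma den_sq_pos {I : ℝ} (h1 : I ≠ 1) (h0 : I ≠ 0) :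
    0 < ((I - 1) ^ 3 * Real.sinh (π * I / 2)) ^ 2 :=
  pow_two_pos_of_ne_zero
    (mul_ne_zero (pow_ne_zero _ (sub_ne_zero.2 h1)) (sinh_piI_ne_zero h0))

lemma deriv_betaFn_neg_left {I : ℝ} (hI : I < 0) : deriv betaFn I < 0 := by
  rw [deriv_betaFn (by linarith) (ne_of_lt hI)]
  apply div_neg_of_neg_of_pos _ (den_sq_pos (by linarith) (ne_of_lt hI))
  exact mul_neg_of_pos_of_neg
    (mul_pos (pow_two_pos_of_ne_zero (ne_of_lt hI))
      (pow_two_pos_of_ne_zero (by intro h; rw [sub_eq_zero] at h; linarith)))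
    (F_neg_left hI)

lemma deriv_betaFn_pos_mid {I : ℝ} (h0 : 0 < I) (h1 : I < 1) : 0 < deriv betaFn I := by
  rw [deriv_betaFn (ne_of_lt h1) (ne_of_gt h0)]
  apply div_pos _ (den_sq_pos (ne_of_lt h1) (ne_of_gt h0))
  exact mul_pos
    (mul_pos (pow_two_pos_of_ne_zero (ne_of_gt h0))
      (pow_two_pos_of_ne_zero (by intro h; rw [sub_eq_zero] at h; linarith)))
    (F_pos_mid h0 h1)

lemma deriv_betaFn_neg_right {I : ℝ} (hI : 1 < I) : deriv betaFn I < 0 := by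
  rw [deriv_betaFn (ne_of_gt hI) (by linarith)]
  apply div_neg_of_neg_of_pos _ (den_sq_pos (ne_of_gt hI) (by linarith))
  exact mul_neg_of_pos_of_neg
    (mul_pos (pow_two_pos_of_ne_zero (by linarith))
      (pow_two_pos_of_ne_zero (by intro h; rw [sub_eq_zero] at h; linarith)))
    (F_neg_right hI)

lemma betaFn_anti_left : StrictAntiOn betaFn (Set.Iio 0) := by
  apply strictAntiOn_of_deriv_neg (convex_Iio 0)
  · intro x hx
    exact ((hasDerivAt_betaFn (by simp at hx; linarith) (ne_of_lt hx)).differentiableAt).continuousAt.continuousWithinAt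
  · rw [interior_Iio]
    exact fun x hx => deriv_betaFn_neg_left hx

lemma betaFn_mono_mid : StrictMonoOn betaFn (Set.Ioo 0 1) := by
  apply strictMonoOn_of_deriv_pos (convex_Ioo 0 1)
  · intro x hx
    exact ((hasDerivAt_betaFn (ne_of_lt hx.2) (ne_of_gt hx.1)).differentiableAt).continuousAt.continuousWithinAt
  · rw [interior_Ioo]
    exact fun x hx => deriv_betaFn_pos_mid hx.1 hx.2

lemma betaFn_anti_right : StrictAntiOn betaFn (Set.Ioi 1) := by
  apply strictAntiOn_of_deriv_neg (convex_Ioi 1)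
  · intro x hx
    exact ((hasDerivAt_betaFn (ne_of_gt hx) (by simp at hx; linarith)).differentiableAt).continuousAt.continuousWithinAt
  · rw [interior_Ioi]
    exact fun x hx => deriv_betaFn_neg_right hx

lemma tendsto_div_sinh : Filter.Tendsto (fun x : ℝ => x / Real.sinh x) (nhdsWithin 0 {(0:ℝ)}ᶜ) (nhds 1) := by
  have h := hasDerivAt_iff_tendsto_slope.1 (Real.hasDerivAt_sinh 0)
  simp only [Real.cosh_zero] at h
  have h2 : Filter.Tendsto (fun x : ℝ => Real.sinh x / x) (nhdsWithin 0 {(0:ℝ)}ᶜ) (nhds 1) := by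
    refine h.congr' ?_
    filter_upwards [eventually_mem_nhdsWithin] with x hx
    simp [slope_def_field, Real.sinh_zero]
  have h3 := h2.inv₀ one_ne_zero
  simp only [inv_div, inv_one] at h3
  exact h3

lemma tendsto_scaled (c : ℝ) (hc : c ≠ 0) (x₀ : ℝ) :
    Filter.Tendsto (fun I : ℝ => c * (I - x₀)) (nhdsWithin x₀ {x₀}ᶜ) (nhdsWithin 0 {(0:ℝ)}ᶜ) := by
  rw [tendsto_nhdsWithin_iff]
  constructor
  · have : Filter.Tendsto (fun I : ℝ => c * (I - x₀)) (nhds x₀) (nhds (c * (x₀ - x₀))) :=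
      (continuous_const.mul (continuous_id.sub continuous_const)).tendsto x₀
    simpa using this.mono_left nhdsWithin_le_nhds
  · filter_upwards [eventually_mem_nhdsWithin] with x hx
    simp only [Set.mem_compl_iff, Set.mem_singleton_iff] at hx ⊢
    intro h
    rcases mul_eq_zero.1 h with h | h
    · exact hc h
    · exact hx (by linarith [sub_eq_zero.1 h])

lemma tendsto_betaFn_zero : Filter.Tendsto betaFn (nhdsWithin 0 {(0:ℝ)}ᶜ) (nhds 0) := by
  have hfactor : ∀ I : ℝ, betaFn I =
      (π * I / 2) / Real.sinh (π * I / 2) *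
        (2 / π * (I ^ 2 * Real.sinh (π * (I - 1) / 2) / (I - 1) ^ 3)) := by
    intro I
    have hπ : π ≠ 0 := Real.pi_ne_zero
    rcases eq_or_ne (Real.sinh (π * I / 2)) 0 with hS | hS
    · simp [betaFn, hS]
    · rcases eq_or_ne I 1 with h1 | h1
      · simp [betaFn, h1]
      · have h1' : I - 1 ≠ 0 := sub_ne_zero.2 h1
        unfold betaFn
        field_simp
  have h1 : Filter.Tendsto (fun I : ℝ => (π * I / 2) / Real.sinh (π * I / 2))
      (nhdsWithin 0 {(0:ℝ)}ᶜ) (nhds 1) := by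
    have hmap := tendsto_scaled (π / 2) (by positivity) 0
    have := tendsto_div_sinh.comp hmap
    refine this.congr ?_
    intro I; simp only [Function.comp]; ring_nf
  have h2 : Filter.Tendsto (fun I : ℝ => 2 / π * (I ^ 2 * Real.sinh (π * (I - 1) / 2) / (I - 1) ^ 3))
      (nhdsWithin 0 {(0:ℝ)}ᶜ) (nhds 0) := by
    have hc : ContinuousAt (fun I : ℝ => 2 / π * (I ^ 2 * Real.sinh (π * (I - 1) / 2) / (I - 1) ^ 3)) 0 := by
      exact ContinuousAt.mul continuousAt_const
        (ContinuousAt.div (by fun_prop) (by fun_prop) (by norm_num))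
    have := hc.tendsto.mono_left (nhdsWithin_le_nhds (s := {(0:ℝ)}ᶜ))
    simpa using this
  have := h1.mul h2
  simp only [one_mul] at this
  exact this.congr fun I => (hfactor I).symm

lemma tendsto_sinh_div_self : Filter.Tendsto (fun x : ℝ => Real.sinh x / x) (nhdsWithin 0 {(0:ℝ)}ᶜ) (nhds 1) := by
  have h3 := tendsto_div_sinh.inv₀ one_ne_zero
  simp only [inv_div, inv_one] at h3
  exact h3

lemma tendsto_betaFn_one : Filter.Tendsto betaFn (nhdsWithin 1 {(1:ℝ)}ᶜ) Filter.atTop := by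
  have hfactor : ∀ I : ℝ, betaFn I =
      Real.sinh (π * (I - 1) / 2) / (π / 2 * (I - 1)) *
        (π / 2 * I ^ 3 / Real.sinh (π * I / 2)) * ((I - 1) ^ 2)⁻¹ := by
    intro I
    have hπ : π ≠ 0 := Real.pi_ne_zero
    rcases eq_or_ne I 1 with h1 | h1
    · simp [betaFn, h1]
    · rcases eq_or_ne (Real.sinh (π * I / 2)) 0 with hS | hS
      · simp [betaFn, hS]
      · have h1' : I - 1 ≠ 0 := sub_ne_zero.2 h1
        unfold betaFn
        field_simp
  have hmap := tendsto_scaled (π / 2) (by positivity) 1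
  have h1 : Filter.Tendsto (fun I : ℝ => Real.sinh (π * (I - 1) / 2) / (π / 2 * (I - 1)))
      (nhdsWithin 1 {(1:ℝ)}ᶜ) (nhds 1) := by
    have := tendsto_sinh_div_self.comp hmap
    refine this.congr fun I => ?_
    simp only [Function.comp]
    ring_nf
  have h2 : Filter.Tendsto (fun I : ℝ => π / 2 * I ^ 3 / Real.sinh (π * I / 2))
      (nhdsWithin 1 {(1:ℝ)}ᶜ) (nhds (π / 2 / Real.sinh (π / 2))) := by
    have hc : ContinuousAt (fun I : ℝ => π / 2 * I ^ 3 / Real.sinh (π * I / 2)) 1 := by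
      apply ContinuousAt.div (by fun_prop) (by fun_prop)
      exact sinh_piI_ne_zero one_ne_zero
    have := hc.tendsto.mono_left (nhdsWithin_le_nhds (s := {(1:ℝ)}ᶜ))
    simpa using this
  have h3 : Filter.Tendsto (fun I : ℝ => ((I - 1) ^ 2)⁻¹) (nhdsWithin 1 {(1:ℝ)}ᶜ) Filter.atTop := by
    apply tendsto_inv_nhdsGT_zero.comp
    rw [tendsto_nhdsWithin_iff]
    constructor
    · have : Filter.Tendsto (fun I : ℝ => (I - 1) ^ 2) (nhds 1) (nhds ((1 - 1) ^ 2)) :=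
        ((continuous_id.sub continuous_const).pow 2).tendsto 1
      simpa using this.mono_left (nhdsWithin_le_nhds (s := {(1:ℝ)}ᶜ))
    · filter_upwards [eventually_mem_nhdsWithin] with x hx
      simp only [Set.mem_compl_iff, Set.mem_singleton_iff] at hx
      have : x - 1 ≠ 0 := sub_ne_zero.2 hx
      exact Set.mem_Ioi.2 (by positivity)
  have hC : (0:ℝ) < 1 * (π / 2 / Real.sinh (π / 2)) := by
    have : 0 < Real.sinh (π / 2) := Real.sinh_pos_iff.2 (by positivity)
    have := Real.pi_pos
    positivity
  have := Filter.Tendsto.pos_mul_atTop hC (h1.mul h2) h3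
  exact this.congr fun I => (hfactor I).symm

lemma betaFn_eq_of_one_lt {I : ℝ} (hI : 1 < I) :
    betaFn I = (I / (I - 1)) ^ 3 *
      (Real.exp (-(π / 2)) * ((1 - Real.exp (-(π * (I - 1)))) / (1 - Real.exp (-(π * I))))) := by
  set u := Real.exp (π * I / 2) with hu_def
  set k := Real.exp (π / 2) with hk_def
  have hπ := Real.pi_pos
  have hu0 : u ≠ 0 := Real.exp_ne_zero _
  have hk0 : k ≠ 0 := Real.exp_ne_zero _
  have hu1 : 1 < u := by
    rw [show (1:ℝ) = Real.exp 0 from Real.exp_zero.symm]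
    exact Real.exp_lt_exp.2 (by nlinarith)
  have hI1 : I - 1 ≠ 0 := sub_ne_zero.2 (ne_of_gt hI)
  have hSB : Real.sinh (π * I / 2) = (u - u⁻¹) / 2 := by
    rw [Real.sinh_eq, Real.exp_neg]
  have hSA : Real.sinh (π * (I - 1) / 2) = (u / k - k / u) / 2 := by
    rw [Real.sinh_eq, show π * (I - 1) / 2 = π * I / 2 - π / 2 by ring, Real.exp_sub,
      show -(π * I / 2 - π / 2) = π / 2 - π * I / 2 by ring, Real.exp_sub]
  have hE1 : Real.exp (-(π * (I - 1))) = k ^ 2 / u ^ 2 := by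
    rw [show -(π * (I - 1)) = π / 2 + π / 2 - (π * I / 2 + π * I / 2) by ring, Real.exp_sub,
      Real.exp_add, Real.exp_add]
    ring
  have hE2 : Real.exp (-(π * I)) = (u ^ 2)⁻¹ := by
    rw [show -(π * I) = 0 - (π * I / 2 + π * I / 2) by ring, Real.exp_sub, Real.exp_add,
      Real.exp_zero]
    ring
  have hEk : Real.exp (-(π / 2)) = k⁻¹ := by rw [Real.exp_neg]
  have hne1 : u - u⁻¹ ≠ 0 := by
    have : u⁻¹ < 1 := by rw [inv_lt_one_iff₀]; right; exact hu1
    intro h; nlinarith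
  have hne2 : (1:ℝ) - (u ^ 2)⁻¹ ≠ 0 := by
    have : (u ^ 2)⁻¹ < 1 := by rw [inv_lt_one_iff₀]; right; nlinarith
    intro h; nlinarith
  have hne3 : u ^ 2 - 1 ≠ 0 := by intro h; nlinarith
  have e1 : u - u⁻¹ = (u ^ 2 - 1) / u := by field_simp
  have e2 : (1:ℝ) - (u ^ 2)⁻¹ = (u ^ 2 - 1) / u ^ 2 := by field_simp
  have e3 : (1:ℝ) - k ^ 2 / u ^ 2 = (u ^ 2 - k ^ 2) / u ^ 2 := by field_simp
  have e4 : u / k - k / u = (u ^ 2 - k ^ 2) / (k * u) := by field_simp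
  unfold betaFn
  rw [hSB, hSA, hE1, hE2, hEk, e1, e2, e3, e4]
  field_simp


lemma tendsto_betaFn_atTop :
    Filter.Tendsto betaFn Filter.atTop (nhds (Real.exp (-(π / 2)))) := by
  have hsub : Filter.Tendsto (fun I : ℝ => I - 1) Filter.atTop Filter.atTop :=
    (Filter.tendsto_atTop_add_const_right _ (-1) Filter.tendsto_id).congr
      (fun x => (sub_eq_add_neg x 1).symm)
  have hq : Filter.Tendsto (fun I : ℝ => (I / (I - 1)) ^ 3) Filter.atTop (nhds 1) := by
    have hb : Filter.Tendsto (fun I : ℝ => 1 + (I - 1)⁻¹) Filter.atTop (nhds 1) := by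
      have h := tendsto_const_nhds (x := (1:ℝ)) (f := Filter.atTop (α := ℝ)) |>.add
        (tendsto_inv_atTop_zero.comp hsub)
      simpa using h
    have h' : Filter.Tendsto (fun I : ℝ => I / (I - 1)) Filter.atTop (nhds 1) := by
      apply hb.congr'
      filter_upwards [Filter.eventually_gt_atTop 1] with I hI
      have h : I - 1 ≠ 0 := sub_ne_zero.2 (ne_of_gt hI)
      field_simp
      ring
    simpa using h'.pow 3
  have he1 : Filter.Tendsto (fun I : ℝ => Real.exp (-(π * (I - 1)))) Filter.atTop (nhds 0) := by
    apply Real.tendsto_exp_atBot.comp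
    rw [show (fun I : ℝ => -(π * (I - 1))) = fun I : ℝ => -(π * (I - 1)) from rfl]
    exact Filter.tendsto_neg_atBot_iff.2 (Filter.Tendsto.const_mul_atTop Real.pi_pos hsub)
  have he2 : Filter.Tendsto (fun I : ℝ => Real.exp (-(π * I))) Filter.atTop (nhds 0) := by
    apply Real.tendsto_exp_atBot.comp
    exact Filter.tendsto_neg_atBot_iff.2 (Filter.Tendsto.const_mul_atTop Real.pi_pos Filter.tendsto_id)
  have hratio : Filter.Tendsto
      (fun I : ℝ => (1 - Real.exp (-(π * (I - 1)))) / (1 - Real.exp (-(π * I))))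
      Filter.atTop (nhds 1) := by
    have := ((tendsto_const_nhds (x := (1:ℝ))).sub he1).div
      ((tendsto_const_nhds (x := (1:ℝ))).sub he2) (by norm_num : (1:ℝ) - 0 ≠ 0)
    simpa [Pi.div_def] using this
  have hG := hq.mul ((tendsto_const_nhds (x := Real.exp (-(π / 2)))).mul hratio)
  simp only [one_mul, mul_one] at hG
  refine hG.congr' ?_
  filter_upwards [Filter.eventually_gt_atTop 1] with I hI
  exact (betaFn_eq_of_one_lt hI).symm

lemma betaFn_symm (I : ℝ) : betaFn (1 - I) = (betaFn I)⁻¹ := by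
  rcases eq_or_ne I 0 with h0 | h0
  · simp [betaFn, h0]
  rcases eq_or_ne I 1 with h1 | h1
  · simp [betaFn, h1]
  have e1 : Real.sinh (π * (1 - I - 1) / 2) = -Real.sinh (π * I / 2) := by
    rw [show π * (1 - I - 1) / 2 = -(π * I / 2) by ring, Real.sinh_neg]
  have e2 : Real.sinh (π * (1 - I) / 2) = -Real.sinh (π * (I - 1) / 2) := by
    rw [show π * (1 - I) / 2 = -(π * (I - 1) / 2) by ring, Real.sinh_neg]
  have hSB : Real.sinh (π * I / 2) ≠ 0 := sinh_piI_ne_zero h0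
  have hSA : Real.sinh (π * (I - 1) / 2) ≠ 0 := by
    rw [Real.sinh_ne_zero]
    intro h
    apply sub_ne_zero.2 h1
    have hπ : 0 < π := Real.pi_pos
    nlinarith [mul_self_nonneg (I - 1)]
  have hI1 : I - 1 ≠ 0 := sub_ne_zero.2 h1
  unfold betaFn
  rw [e1, e2, inv_div]
  rw [div_eq_div_iff
    (mul_ne_zero (pow_ne_zero _ (by intro h; exact h0 (by linarith))) (neg_ne_zero.2 hSA))
    (mul_ne_zero (pow_ne_zero _ h0) hSA)]
  ring

lemma tendsto_betaFn_atBot :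
    Filter.Tendsto betaFn Filter.atBot (nhds (Real.exp (π / 2))) := by
  have hmap : Filter.Tendsto (fun J : ℝ => 1 - J) Filter.atBot Filter.atTop := by
    apply Filter.tendsto_atTop_add_const_left
    exact Filter.tendsto_neg_atBot_atTop
  have h1 : Filter.Tendsto (fun I : ℝ => betaFn (1 - I)) Filter.atTop
      (nhds (Real.exp (-(π / 2)))⁻¹) := by
    exact (tendsto_betaFn_atTop.inv₀ (Real.exp_ne_zero _)).congr
      (fun I => (betaFn_symm I).symm)
  have h2 := h1.comp hmap
  have : (fun I : ℝ => betaFn (1 - I)) ∘ (fun J : ℝ => 1 - J) = betaFn := by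
    funext J; simp [Function.comp, sub_sub_cancel]
  rw [this] at h2
  rwa [Real.exp_neg, inv_inv] at h2

lemma betaFn_continuousOn {s : Set ℝ} (h0 : (0:ℝ) ∉ s) (h1 : (1:ℝ) ∉ s) :
    ContinuousOn betaFn s := fun x hx =>
  ((hasDerivAt_betaFn (fun h => h1 (h ▸ hx)) (fun h => h0 (h ▸ hx))).differentiableAt).continuousAt.continuousWithinAt


/-- For `e^{-π/2} < 1/|μ| < e^{π/2}`, the equation `β(I) = 1/|μ|` has exactly three
solutions `I₋ < 0`, `I₀ ∈ (0,1)`, `I₊ > 1`, with `β < 1/|μ|` on `(I₋, I₀) ∪ (I₊, ∞)`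
and `β > 1/|μ|` on `(-∞, I₋) ∪ (I₀, 1) ∪ (1, I₊)`. -/
theorem betaFn_three_solutions (μ : ℝ) (hμ : μ ≠ 0)
    (h₁ : Real.exp (-(π / 2)) < 1 / |μ|) (h₂ : 1 / |μ| < Real.exp (π / 2)) :
    ∃ Im I0 Ip : ℝ, Im < 0 ∧ I0 ∈ Set.Ioo (0 : ℝ) 1 ∧ 1 < Ip ∧
      betaFn Im = 1 / |μ| ∧ betaFn I0 = 1 / |μ| ∧ betaFn Ip = 1 / |μ| ∧
      (∀ I : ℝ, betaFn I = 1 / |μ| → I = Im ∨ I = I0 ∨ I = Ip) ∧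
      (∀ I ∈ Set.Ioo Im I0, betaFn I < 1 / |μ|) ∧
      (∀ I : ℝ, Ip < I → betaFn I < 1 / |μ|) ∧
      (∀ I : ℝ, I < Im → 1 / |μ| < betaFn I) ∧
      (∀ I ∈ Set.Ioo I0 1, 1 / |μ| < betaFn I) ∧
      (∀ I ∈ Set.Ioo 1 Ip, 1 / |μ| < betaFn I) := by
  set c := 1 / |μ| with hc_def
  have hc0 : 0 < c := by positivity
  have hbeta0 : betaFn 0 = 0 := by simp [betaFn]
  have hbeta1 : betaFn 1 = 0 := by simp [betaFn]
  -- point b₋ in (-∞, 0) with betaFn < c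
  obtain ⟨bm, hbm_lt, hbm_neg⟩ : ∃ b : ℝ, betaFn b < c ∧ b < 0 := by
    have h := tendsto_betaFn_zero.mono_left
      (nhdsWithin_mono 0 (show Set.Iio (0:ℝ) ⊆ {(0:ℝ)}ᶜ from fun x hx => ne_of_lt hx))
    exact ((h.eventually (eventually_lt_nhds hc0)).and eventually_mem_nhdsWithin).exists
  -- point a₋ < b₋ with betaFn > c
  obtain ⟨am, ham_gt, ham_lt⟩ : ∃ a : ℝ, c < betaFn a ∧ a < bm :=
    ((tendsto_betaFn_atBot.eventually (eventually_gt_nhds h₂)).and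
      (Filter.eventually_lt_atBot bm)).exists
  -- Im
  have hcontm : ContinuousOn betaFn (Set.Icc am bm) :=
    betaFn_continuousOn (fun h => absurd (h.2 : (0:ℝ) ≤ bm) (not_le.2 hbm_neg))
      (fun h => absurd (h.2 : (1:ℝ) ≤ bm) (not_le.2 (by linarith)))
  obtain ⟨Im, hIm_mem, hIm_eq⟩ :=
    intermediate_value_Ioo' (le_of_lt ham_lt) hcontm (Set.mem_Ioo.2 ⟨hbm_lt, ham_gt⟩)
  have hIm_neg : Im < 0 := lt_trans hIm_mem.2 hbm_neg
  -- point a₀ in (0,1) with betaFn < c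
  obtain ⟨a0, ha0_lt, ha0_pos, ha0_lt1⟩ : ∃ a : ℝ, betaFn a < c ∧ 0 < a ∧ a < 1 := by
    have h := tendsto_betaFn_zero.mono_left
      (nhdsWithin_mono 0 (show Set.Ioi (0:ℝ) ⊆ {(0:ℝ)}ᶜ from fun x hx => ne_of_gt hx))
    have h1' : ∀ᶠ I in nhdsWithin 0 (Set.Ioi 0), betaFn I < c :=
      h.eventually (eventually_lt_nhds hc0)
    have h2' : ∀ᶠ I in nhdsWithin 0 (Set.Ioi (0:ℝ)), I ∈ Set.Ioi (0:ℝ) :=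
      eventually_mem_nhdsWithin
    have h3' : ∀ᶠ I in nhdsWithin 0 (Set.Ioi (0:ℝ)), I < 1 :=
      (eventually_lt_nhds one_pos).filter_mono nhdsWithin_le_nhds
    obtain ⟨a, ha⟩ := ((h1'.and h2').and h3').exists
    exact ⟨a, ha.1.1, ha.1.2, ha.2⟩
  -- point b₀ in (a₀,1) with betaFn > c
  obtain ⟨b0, hb0_gt, hb0_lt1, hb0_gta⟩ : ∃ b : ℝ, c < betaFn b ∧ b < 1 ∧ a0 < b := by
    have h := tendsto_betaFn_one.mono_left
      (nhdsWithin_mono 1 (show Set.Iio (1:ℝ) ⊆ {(1:ℝ)}ᶜ from fun x hx => ne_of_lt hx))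
    have h1' : ∀ᶠ I in nhdsWithin 1 (Set.Iio 1), c < betaFn I := h.eventually_gt_atTop c
    have h2' : ∀ᶠ I in nhdsWithin 1 (Set.Iio (1:ℝ)), I ∈ Set.Iio (1:ℝ) :=
      eventually_mem_nhdsWithin
    have h3' : ∀ᶠ I in nhdsWithin 1 (Set.Iio (1:ℝ)), a0 < I :=
      (eventually_gt_nhds ha0_lt1).filter_mono nhdsWithin_le_nhds
    obtain ⟨b, hb⟩ := ((h1'.and h2').and h3').exists
    exact ⟨b, hb.1.1, hb.1.2, hb.2⟩
  -- I0
  have hcont0 : ContinuousOn betaFn (Set.Icc a0 b0) :=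
    betaFn_continuousOn (fun h => absurd (h.1 : a0 ≤ 0) (not_le.2 ha0_pos))
      (fun h => absurd (h.2 : (1:ℝ) ≤ b0) (not_le.2 hb0_lt1))
  obtain ⟨I0, hI0_mem, hI0_eq⟩ :=
    intermediate_value_Ioo (le_of_lt hb0_gta) hcont0 (Set.mem_Ioo.2 ⟨ha0_lt, hb0_gt⟩)
  have hI0_pos : 0 < I0 := lt_trans ha0_pos hI0_mem.1
  have hI0_lt1 : I0 < 1 := lt_trans hI0_mem.2 hb0_lt1
  -- point b₁ in (1,∞) with betaFn > c
  obtain ⟨b1, hb1_gt, hb1_one⟩ : ∃ b : ℝ, c < betaFn b ∧ 1 < b := by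
    have h := tendsto_betaFn_one.mono_left
      (nhdsWithin_mono 1 (show Set.Ioi (1:ℝ) ⊆ {(1:ℝ)}ᶜ from fun x hx => ne_of_gt hx))
    exact ((h.eventually_gt_atTop c).and eventually_mem_nhdsWithin).exists
  -- point a₁ > b₁ with betaFn < c
  obtain ⟨a1, ha1_lt, ha1_gt⟩ : ∃ a : ℝ, betaFn a < c ∧ b1 < a :=
    ((tendsto_betaFn_atTop.eventually (eventually_lt_nhds h₁)).and
      (Filter.eventually_gt_atTop b1)).exists
  -- Ip
  have hcontp : ContinuousOn betaFn (Set.Icc b1 a1) :=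
    betaFn_continuousOn (fun h => absurd (h.1 : b1 ≤ 0) (not_le.2 (by linarith)))
      (fun h => absurd (h.1 : b1 ≤ 1) (not_le.2 hb1_one))
  obtain ⟨Ip, hIp_mem, hIp_eq⟩ :=
    intermediate_value_Ioo' (le_of_lt ha1_gt) hcontp (Set.mem_Ioo.2 ⟨ha1_lt, hb1_gt⟩)
  have hIp_gt1 : 1 < Ip := lt_trans hb1_one hIp_mem.1
  -- memberships
  have hImS : Im ∈ Set.Iio (0:ℝ) := hIm_neg
  have hI0S : I0 ∈ Set.Ioo (0:ℝ) 1 := ⟨hI0_pos, hI0_lt1⟩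
  have hIpS : Ip ∈ Set.Ioi (1:ℝ) := hIp_gt1
  refine ⟨Im, I0, Ip, hIm_neg, hI0S, hIp_gt1, hIm_eq, hI0_eq, hIp_eq, ?_, ?_, ?_, ?_, ?_, ?_⟩
  · -- uniqueness
    intro I hI
    rcases lt_trichotomy I 0 with hI0' | hI0' | hI0'
    · exact Or.inl (betaFn_anti_left.injOn hI0' hImS (hI.trans hIm_eq.symm))
    · exact absurd (hI0' ▸ hI) (by rw [hbeta0]; exact (ne_of_lt hc0))
    · rcases lt_trichotomy I 1 with hI1' | hI1' | hI1'
      · exact Or.inr (Or.inl (betaFn_mono_mid.injOn ⟨hI0', hI1'⟩ hI0S (hI.trans hI0_eq.symm)))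
      · exact absurd (hI1' ▸ hI) (by rw [hbeta1]; exact (ne_of_lt hc0))
      · exact Or.inr (Or.inr (betaFn_anti_right.injOn hI1' hIpS (hI.trans hIp_eq.symm)))
  · -- Ioo Im I0 : betaFn < c
    intro I hI
    rcases lt_trichotomy I 0 with h | h | h
    · exact hIm_eq ▸ betaFn_anti_left hImS h hI.1
    · rw [h, hbeta0]; exact hc0
    · exact hI0_eq ▸ betaFn_mono_mid ⟨h, lt_trans hI.2 hI0_lt1⟩ hI0S hI.2
  · -- I > Ip
    intro I hI
    exact hIp_eq ▸ betaFn_anti_right hIpS (lt_trans hIp_gt1 hI) hI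
  · -- I < Im
    intro I hI
    exact hIm_eq ▸ betaFn_anti_left (lt_trans hI hIm_neg) hImS hI
  · -- Ioo I0 1
    intro I hI
    exact hI0_eq ▸ betaFn_mono_mid hI0S ⟨lt_trans hI0_pos hI.1, hI.2⟩ hI.1
  · -- Ioo 1 Ip
    intro I hI
    exact hIp_eq ▸ betaFn_anti_right hI.1 hIpS hI.2
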